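/- For 1 ≤ k ≤ n−4, the densities f (of n·Beta(k/2,(n−k)/2)) and g (of χ²_k) satisfy the pointwise bound (f(u)/g(u) − 1)^+ ≤ (k+3)/(n−k−3) for all u > 0 where g(u) > 0. -/

import Mathlib

open MeasureTheory
open Real

/-- Gradient inequality for the convex function `G(t) = t log t - t`. -/
lemma aux_grad {x y : ℝ} (hx : 0 < x) (hxy : x ≤ y) :
    (y - x) * Real.log x ≤ (y * Real.log y - y) - (x * Real.log x - x) := by
  have hy : 0 < y := lt_of_lt_of_le hx hxy
  have h1 : Real.log (x / y) ≤ x / y - 1 := Real.log_le_sub_one_of_pos (div_pos hx hy)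
  rw [Real.log_div hx.ne' hy.ne'] at h1
  have h2 := mul_le_mul_of_nonneg_left h1 hy.le
  have h4 : y * (x / y - 1) = x - y := by field_simp
  nlinarith [h2, h4]

/-- Telescoping bound: `log Γ(c+j) - log Γ(c) ≤ G(c+j) - G(c)`. -/
lemma aux_prod (c : ℝ) (hc : 1 ≤ c) : ∀ j : ℕ,
    Real.log (Real.Gamma (c + j)) - Real.log (Real.Gamma c) ≤
      ((c + j) * Real.log (c + j) - (c + j)) - (c * Real.log c - c) := by
  intro j
  induction j with
  | zero => simp
  | succ j ih =>
    have hcj : (0:ℝ) < c + j := by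
      have : (0:ℝ) ≤ (j:ℝ) := Nat.cast_nonneg j
      linarith
    have h1 : Real.Gamma (c + ((j:ℕ)+1:ℕ)) = (c + j) * Real.Gamma (c + j) := by
      have e : (c + (((j:ℕ)+1:ℕ)) : ℝ) = (c + j) + 1 := by push_cast; ring
      rw [e, Real.Gamma_add_one hcj.ne']
    have hΓ : (0:ℝ) < Real.Gamma (c + j) := Real.Gamma_pos_of_pos hcj
    have h2 : Real.log (Real.Gamma (c + ((j:ℕ)+1:ℕ))) =
        Real.log (c + j) + Real.log (Real.Gamma (c + j)) := by
      rw [h1, Real.log_mul hcj.ne' hΓ.ne']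
    have h3 := aux_grad (x := c + j) (y := c + j + 1) hcj (by linarith)
    have e2 : ((c + (((j:ℕ)+1:ℕ)) : ℝ)) = c + (j:ℝ) + 1 := by push_cast; ring
    rw [h2, e2]

    linarith [ih, h3]

/-- Log-convexity interpolation: `log Γ(b+1/2) - log Γ(b) ≤ (1/2) log b`. -/
lemma aux_half (b : ℝ) (hb : 0 < b) :
    Real.log (Real.Gamma (b + 1/2)) - Real.log (Real.Gamma b) ≤ (1/2) * Real.log b := by
  have h := Real.convexOn_log_Gamma.2 (Set.mem_Ioi.2 hb)
    (Set.mem_Ioi.2 (by linarith : (0:ℝ) < b + 1))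
    (by norm_num : (0:ℝ) ≤ 1/2) (by norm_num : (0:ℝ) ≤ 1/2) (by norm_num)
  simp only [Function.comp, smul_eq_mul] at h
  have e1 : (1/2 : ℝ) * b + (1/2 : ℝ) * (b+1) = b + 1/2 := by ring
  rw [e1] at h
  rw [Real.Gamma_add_one hb.ne', Real.log_mul hb.ne' (Real.Gamma_pos_of_pos hb).ne'] at h
  linarith

/-- Key Gamma-ratio bound. -/
lemma aux_claim3 (a b : ℝ) (hb : 2 ≤ b) (s : ℝ) (j : ℕ) (hs : s = 0 ∨ s = 1/2)
    (hja : a = s + j) :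
    Real.log (Real.Gamma (a + b)) - Real.log (Real.Gamma b) ≤
      Real.log 2 - Real.log (2*b - 3) - (a + 1) + (a + b) * Real.log (a + b)
        - (b - 1) * Real.log (b - 1) := by
  have hb0 : (0:ℝ) < b := by linarith
  have hb1 : (0:ℝ) < b - 1 := by linarith
  have hb32 : (0:ℝ) < b - 3/2 := by linarith
  have hsplit : Real.log (2*b - 3) = Real.log 2 + Real.log (b - 3/2) := by
    rw [show (2*b - 3 : ℝ) = 2*(b - 3/2) by ring, Real.log_mul two_ne_zero hb32.ne']
  rcases hs with hs | hs
  · subst hs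
    have hja' : a = (j:ℝ) := by simpa using hja
    have hprod := aux_prod b (by linarith) j
    rw [show (b + (j:ℝ)) = a + b by rw [hja']; ring] at hprod
    have key := aux_grad (x := b - 1) (y := b) hb1 (by linarith)
    have hmono : Real.log (b - 3/2) ≤ Real.log (b - 1) :=
      (Real.log_le_log_iff hb32 hb1).2 (by linarith)
    linarith [hprod, key, hmono, hsplit]
  · subst hs
    have hc : (1:ℝ) ≤ b + 1/2 := by linarith
    have hprod := aux_prod (b + 1/2) hc j
    rw [show (b + 1/2 + (j:ℝ)) = a + b by rw [hja]; ring] at hprod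
    have hhalf := aux_half b hb0
    have key := aux_grad (x := b - 1) (y := b + 1/2) hb1 (by linarith)
    have hbb : b * (b - 3/2)^2 ≤ (b - 1)^3 := by nlinarith
    have hcube : Real.log b + 2 * Real.log (b - 3/2) ≤ 3 * Real.log (b - 1) := by
      have h := (Real.log_le_log_iff (by positivity) (by positivity)).2 hbb
      rw [Real.log_mul hb0.ne' (by positivity), Real.log_pow, Real.log_pow] at h
      push_cast at h
      linarith
    linarith [hprod, hhalf, key, hcube, hsplit]

/-- Peak bound: the ratio is maximized at `u = k+2`. -/
lemma aux_peak (nn kk u : ℝ) (hu : 0 < u) (hun : u < nn) (hk1 : 1 ≤ kk) (hk4 : kk + 4 ≤ nn) :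
    u/2 + ((nn - kk)/2 - 1) * Real.log (1 - u/nn) ≤
      kk/2 + 1 + ((nn - kk)/2 - 1) * (Real.log (nn - kk - 2) - Real.log nn) := by
  have hn0 : (0:ℝ) < nn := by linarith
  have hm0 : (0:ℝ) < (nn - kk)/2 - 1 := by linarith
  set m : ℝ := (nn - kk)/2 - 1 with hm
  have hm2 : (0:ℝ) < nn - kk - 2 := by linarith
  have hu1 : (0:ℝ) < 1 - u/nn := by
    rw [sub_pos, div_lt_one hn0]; exact hun
  have h1 := Real.add_one_le_exp ((kk + 2 - u)/(2*m))
  have h2 : (2*m) * ((kk + 2 - u)/(2*m) + 1) ≤ (2*m) * Real.exp ((kk + 2 - u)/(2*m)) :=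
    mul_le_mul_of_nonneg_left h1 (by linarith)
  have h3 : (2*m) * ((kk + 2 - u)/(2*m) + 1) = nn - u := by
    field_simp
    rw [hm]; ring
  have hnum : nn - u ≤ Real.exp ((kk + 2 - u)/(2*m)) * (nn - kk - 2) := by
    have e : (2*m) * Real.exp ((kk + 2 - u)/(2*m))
        = Real.exp ((kk + 2 - u)/(2*m)) * (nn - kk - 2) := by rw [hm]; ring
    linarith [h2, h3]
  have base : 1 - u/nn ≤ Real.exp ((kk + 2 - u)/(2*m)) * ((nn - kk - 2)/nn) := by
    have e1 : (1 : ℝ) - u/nn = (nn - u)/nn := by field_simp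
    rw [e1, show Real.exp ((kk + 2 - u)/(2*m)) * ((nn - kk - 2)/nn)
      = (Real.exp ((kk + 2 - u)/(2*m)) * (nn - kk - 2))/nn by ring]
    gcongr
  have hlog := (Real.log_le_log_iff hu1 (by positivity)).2 base
  rw [Real.log_mul (Real.exp_pos _).ne' (by positivity), Real.log_exp,
    Real.log_div hm2.ne' hn0.ne'] at hlog
  have h4 := mul_le_mul_of_nonneg_left hlog hm0.le
  have e3 : m * ((kk + 2 - u)/(2*m) + (Real.log (nn - kk - 2) - Real.log nn))
      = (kk + 2 - u)/2 + m * (Real.log (nn - kk - 2) - Real.log nn) := by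
    field_simp
  rw [e3] at h4
  linarith

/-- For `1 ≤ k ≤ n − 4`, the densities `f` (of `n·Beta(k/2,(n-k)/2)`) and `g` (of `χ²_k`)
satisfy the pointwise bound `(f(u)/g(u) − 1)⁺ ≤ (k+3)/(n−k−3)` for all `u > 0`. -/
theorem stmt_6 (k n : ℕ) (hk : 1 ≤ k) (hkn : k + 4 ≤ n)
    (g : ℝ → ℝ)
    (hg : ∀ u : ℝ, 0 < u → g u =
      (2 ^ ((k : ℝ) / 2) * Real.Gamma ((k : ℝ) / 2))⁻¹ * Real.exp (-u / 2) *
        u ^ ((k : ℝ) / 2 - 1))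
    (f : ℝ → ℝ)
    (hf : ∀ u : ℝ, f u =
      if 0 ≤ u ∧ u ≤ (n : ℝ) then
        (1 / (n : ℝ)) * (Real.Gamma ((n : ℝ) / 2) /
          (Real.Gamma ((k : ℝ) / 2) * Real.Gamma (((n : ℝ) - (k : ℝ)) / 2))) *
          (u / n) ^ ((k : ℝ) / 2 - 1) * (1 - u / n) ^ (((n : ℝ) - (k : ℝ)) / 2 - 1)
      else 0) :
    ∀ u : ℝ, 0 < u → 0 < g u →
      max (f u / g u - 1) 0 ≤ ((k : ℝ) + 3) / ((n : ℝ) - (k : ℝ) - 3) := by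
  intro u hu hgu
  have hk1 : (1:ℝ) ≤ (k:ℝ) := by exact_mod_cast hk
  have hn4 : (k:ℝ) + 4 ≤ (n:ℝ) := by exact_mod_cast hkn
  have hn0 : (0:ℝ) < (n:ℝ) := by linarith
  have hden : (0:ℝ) < (n:ℝ) - (k:ℝ) - 3 := by linarith
  have key : f u / g u ≤ (n:ℝ) / ((n:ℝ) - (k:ℝ) - 3) := by
    rcases lt_or_ge u (n:ℝ) with hun | hun
    · rw [div_le_iff₀ hgu, hf u, if_pos ⟨hu.le, hun.le⟩, hg u hu]
      have hu1 : (0:ℝ) < 1 - u/(n:ℝ) := by rw [sub_pos, div_lt_one hn0]; exact hun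
      have hΓk : 0 < Real.Gamma ((k:ℝ)/2) := Real.Gamma_pos_of_pos (by linarith)
      have hΓn : 0 < Real.Gamma ((n:ℝ)/2) := Real.Gamma_pos_of_pos (by linarith)
      have hΓb : 0 < Real.Gamma (((n:ℝ)-(k:ℝ))/2) := Real.Gamma_pos_of_pos (by linarith)
      have hupow : 0 < u ^ ((k:ℝ)/2 - 1) := Real.rpow_pos_of_pos hu _
      have hunpow : 0 < (u/(n:ℝ)) ^ ((k:ℝ)/2 - 1) := Real.rpow_pos_of_pos (div_pos hu hn0) _
      have h1upow : 0 < (1 - u/(n:ℝ)) ^ (((n:ℝ)-(k:ℝ))/2 - 1) := Real.rpow_pos_of_pos hu1 _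
      have h2pow : 0 < (2:ℝ) ^ ((k:ℝ)/2) := Real.rpow_pos_of_pos two_pos _
      have hP : 0 < 1 / (n:ℝ) * (Real.Gamma ((n:ℝ)/2) /
          (Real.Gamma ((k:ℝ)/2) * Real.Gamma (((n:ℝ)-(k:ℝ))/2))) *
          (u/(n:ℝ)) ^ ((k:ℝ)/2 - 1) * (1 - u/(n:ℝ)) ^ (((n:ℝ)-(k:ℝ))/2 - 1) :=
        mul_pos (mul_pos (mul_pos (one_div_pos.2 hn0)
          (div_pos hΓn (mul_pos hΓk hΓb))) hunpow) h1upow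
      have hQ : 0 < (n:ℝ)/((n:ℝ)-(k:ℝ)-3) *
          (((2:ℝ) ^ ((k:ℝ)/2) * Real.Gamma ((k:ℝ)/2))⁻¹ * Real.exp (-u/2) *
            u ^ ((k:ℝ)/2 - 1)) :=
        mul_pos (div_pos hn0 hden) (mul_pos (mul_pos (inv_pos.2 (mul_pos h2pow hΓk))
          (Real.exp_pos _)) hupow)
      rw [← Real.log_le_log_iff hP hQ]
      rw [Real.log_mul (mul_pos (mul_pos (one_div_pos.2 hn0)
            (div_pos hΓn (mul_pos hΓk hΓb))) hunpow).ne' h1upow.ne',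
          Real.log_mul (mul_pos (one_div_pos.2 hn0)
            (div_pos hΓn (mul_pos hΓk hΓb))).ne' hunpow.ne',
          Real.log_mul (one_div_pos.2 hn0).ne' (div_pos hΓn (mul_pos hΓk hΓb)).ne',
          one_div, Real.log_inv,
          Real.log_div hΓn.ne' (mul_pos hΓk hΓb).ne',
          Real.log_mul hΓk.ne' hΓb.ne',
          Real.log_rpow (div_pos hu hn0), Real.log_rpow hu1,
          Real.log_div hu.ne' hn0.ne',
          Real.log_mul (div_pos hn0 hden).ne' (mul_pos (mul_pos
            (inv_pos.2 (mul_pos h2pow hΓk)) (Real.exp_pos _)) hupow).ne',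
          Real.log_div hn0.ne' hden.ne',
          Real.log_mul (mul_pos (inv_pos.2 (mul_pos h2pow hΓk))
            (Real.exp_pos _)).ne' hupow.ne',
          Real.log_mul (inv_pos.2 (mul_pos h2pow hΓk)).ne' (Real.exp_pos _).ne',
          Real.log_inv, Real.log_mul h2pow.ne' hΓk.ne',
          Real.log_rpow two_pos, Real.log_exp, Real.log_rpow hu]
      have hb2 : (2:ℝ) ≤ ((n:ℝ)-(k:ℝ))/2 := by linarith
      obtain ⟨s, j, hs, hja⟩ : ∃ s : ℝ, ∃ j : ℕ, (s = 0 ∨ s = 1/2) ∧ ((k:ℝ)/2 = s + j) := by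
        rcases Nat.even_or_odd k with ⟨j, hj⟩ | ⟨j, hj⟩
        · exact ⟨0, j, Or.inl rfl, by subst hj; push_cast; ring⟩
        · exact ⟨1/2, j, Or.inr rfl, by subst hj; push_cast; ring⟩
      have h3 := aux_claim3 ((k:ℝ)/2) (((n:ℝ)-(k:ℝ))/2) hb2 s j hs hja
      rw [show ((k:ℝ)/2 + ((n:ℝ)-(k:ℝ))/2) = (n:ℝ)/2 by ring] at h3
      rw [show (2*(((n:ℝ)-(k:ℝ))/2) - 3) = (n:ℝ)-(k:ℝ)-3 by ring] at h3
      rw [show ((((n:ℝ)-(k:ℝ))/2) - 1) = ((n:ℝ)-(k:ℝ)-2)/2 by ring] at h3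
      rw [Real.log_div (show (0:ℝ) < (n:ℝ)-(k:ℝ)-2 by linarith).ne'
        (two_ne_zero : (2:ℝ) ≠ 0)] at h3
      rw [Real.log_div hn0.ne' (two_ne_zero : (2:ℝ) ≠ 0)] at h3
      have hpeak := aux_peak (n:ℝ) (k:ℝ) u hu hun hk1 hn4
      linarith [h3, hpeak]
    · have hf0 : f u = 0 := by
        rcases eq_or_lt_of_le hun with heq | hlt
        · rw [hf u, if_pos ⟨hu.le, heq.ge⟩, ← heq, div_self hn0.ne']
          rw [show (1:ℝ) - 1 = 0 by ring,
            Real.zero_rpow (show (0:ℝ) < ((n:ℝ)-(k:ℝ))/2 - 1 by linarith).ne', mul_zero]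
        · rw [hf u, if_neg (fun h => absurd h.2 (not_le.2 hlt))]
      rw [hf0, zero_div]
      positivity
  have hsplit : (n:ℝ)/((n:ℝ)-(k:ℝ)-3) = 1 + ((k:ℝ)+3)/((n:ℝ)-(k:ℝ)-3) := by
    field_simp
    ring
  apply max_le _ (div_nonneg (by positivity) hden.le)
  linarith [key, hsplit]
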